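/- For r = 2 the operators satisfy: the formal series a(z) = 1 − (5/24)z^{-3} + … ∈ 1 + z^{-3}ℚ[[z^{-3}]] solving S_z^2 a = z^2 a, together with its rotation a(ωz) (ω = e^{iπ/3}), satisfies the bilinear concomitant identity S_z^⋆(a(ωz))·a(z) + a(ωz)·S_z a(z) = −2z in the ring of formal Laurent series. -/

import Mathlib

open HahnSeries Pointwise

/-- The operator `S_z = z^{1-r} ∂_z - (r-1)/(2 z^r) - z` acting on formal Laurent
series with finitely many positive powers of `z`, written in the variable
`t = z⁻¹` (so `coeff m` is the coefficient of `z^{-m}`). -/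
noncomputable def Sop (r : ℕ) (f : LaurentSeries ℂ) : LaurentSeries ℂ where
  coeff m := ((r + 1 : ℂ) / 2 - m) * f.coeff (m - r) - f.coeff (m + 1)
  isPWO_support' := by
    have h : (Function.support fun m : ℤ =>
        ((r + 1 : ℂ) / 2 - m) * f.coeff (m - r) - f.coeff (m + 1))
        ⊆ (f.support + {(r : ℤ)}) ∪ (f.support + ({(-1 : ℤ)} : Set ℤ)) := by
      intro m hm
      simp only [Function.mem_support] at hm
      by_cases h1 : f.coeff (m - (r : ℤ)) = 0
      · have h2 : f.coeff (m + 1) ≠ 0 := fun h2 => hm (by rw [h1, h2]; ring)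
        right
        exact Set.mem_add.mpr ⟨m + 1, by simpa using h2, -1, rfl, by ring⟩
      · left
        exact Set.mem_add.mpr ⟨m - r, by simpa using h1, r, rfl, by ring⟩
    exact ((f.isPWO_support.add (Set.isPWO_singleton (r : ℤ))).union
      (f.isPWO_support.add (Set.isPWO_singleton (-1 : ℤ)))).mono h

/-- The formal adjoint `S_z^⋆ = -z^{1-r} ∂_z + (r-1)/(2 z^r) - z`. -/
noncomputable def Sstar (r : ℕ) (f : LaurentSeries ℂ) : LaurentSeries ℂ where
  coeff m := ((m : ℂ) - (r + 1) / 2) * f.coeff (m - r) - f.coeff (m + 1)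
  isPWO_support' := by
    have h : (Function.support fun m : ℤ =>
        ((m : ℂ) - (r + 1) / 2) * f.coeff (m - r) - f.coeff (m + 1))
        ⊆ (f.support + {(r : ℤ)}) ∪ (f.support + ({(-1 : ℤ)} : Set ℤ)) := by
      intro m hm
      simp only [Function.mem_support] at hm
      by_cases h1 : f.coeff (m - (r : ℤ)) = 0
      · have h2 : f.coeff (m + 1) ≠ 0 := fun h2 => hm (by rw [h1, h2]; ring)
        right
        exact Set.mem_add.mpr ⟨m + 1, by simpa using h2, -1, rfl, by ring⟩
      · left
        exact Set.mem_add.mpr ⟨m - r, by simpa using h1, r, rfl, by ring⟩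
    exact ((f.isPWO_support.add (Set.isPWO_singleton (r : ℤ))).union
      (f.isPWO_support.add (Set.isPWO_singleton (-1 : ℤ)))).mono h

/-- Substitution `z ↦ ω z` on a formal Laurent series (`coeff m` is the
coefficient of `z^{-m}`, which gets multiplied by `ω^{-m}`). -/
noncomputable def rot (ω : ℂ) (f : LaurentSeries ℂ) : LaurentSeries ℂ where
  coeff m := ω ^ (-m) * f.coeff m
  isPWO_support' := f.isPWO_support.mono (fun m hm => by
    simp only [Function.mem_support] at hm ⊢
    exact fun h => hm (by rw [h, mul_zero]))


noncomputable def Dop (f : LaurentSeries ℂ) : LaurentSeries ℂ where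
  coeff m := (m : ℂ) * f.coeff m
  isPWO_support' := f.isPWO_support.mono (fun m hm => by
    simp only [Function.mem_support] at hm ⊢
    exact fun h => hm (by rw [h, mul_zero]))

@[simp] lemma Dop_coeff (f : LaurentSeries ℂ) (m : ℤ) :
    (Dop f).coeff m = (m : ℂ) * f.coeff m := rfl

lemma Dop_support (f : LaurentSeries ℂ) : (Dop f).support ⊆ f.support := by
  intro m hm
  simp only [HahnSeries.mem_support, Dop_coeff] at hm ⊢
  exact fun h => hm (by rw [h, mul_zero])

lemma single_mul_coeff' (k m : ℤ) (c : ℂ) (f : LaurentSeries ℂ) :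
    (HahnSeries.single k c * f).coeff m = c * f.coeff (m - k) := by
  have := HahnSeries.coeff_single_mul_add (r := c) (x := f) (a := m - k) (b := k)
  simpa using this

lemma Dop_sub (f g : LaurentSeries ℂ) : Dop (f - g) = Dop f - Dop g := by
  ext m
  simp [HahnSeries.coeff_sub, mul_sub]

lemma Dop_mul (f g : LaurentSeries ℂ) : Dop (f * g) = Dop f * g + f * Dop g := by
  ext n
  rw [HahnSeries.coeff_add, Dop_coeff, HahnSeries.coeff_mul,
    HahnSeries.coeff_mul_left' f.isPWO_support (Dop_support f),
    HahnSeries.coeff_mul_right' g.isPWO_support (Dop_support g),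
    Finset.mul_sum, ← Finset.sum_add_distrib]
  refine Finset.sum_congr rfl fun ij hij => ?_
  rw [Finset.mem_addAntidiagonal] at hij
  have h : ((ij.1 : ℂ)) + (ij.2 : ℂ) = (n : ℂ) := by exact_mod_cast congrArg (Int.cast : ℤ → ℂ) hij.2.2
  simp only [Dop_coeff]
  rw [← h]; ring

lemma mul_coeff_neg (x y : LaurentSeries ℂ)
    (hx : ∀ m : ℤ, m < 0 → x.coeff m = 0) (hy : ∀ m : ℤ, m < 0 → y.coeff m = 0)
    (n : ℤ) (hn : n < 0) : (x * y).coeff n = 0 := by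
  rw [HahnSeries.coeff_mul]
  refine Finset.sum_eq_zero fun ij hij => ?_
  rw [Finset.mem_addAntidiagonal] at hij
  rcases lt_or_ge ij.1 0 with h | h
  · rw [hx _ h, zero_mul]
  · have : ij.2 < 0 := by omega
    rw [hy _ this, mul_zero]

lemma mul_coeff_zero' (x y : LaurentSeries ℂ)
    (hx : ∀ m : ℤ, m < 0 → x.coeff m = 0) (hy : ∀ m : ℤ, m < 0 → y.coeff m = 0) :
    (x * y).coeff 0 = x.coeff 0 * y.coeff 0 := by
  rw [HahnSeries.coeff_mul]
  by_cases h0 : x.coeff 0 ≠ 0 ∧ y.coeff 0 ≠ 0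
  · have hmem : ((0:ℤ), (0:ℤ)) ∈ Finset.antidiagonal x.isPWO_support y.isPWO_support 0 := by
      rw [Finset.mem_addAntidiagonal]
      exact ⟨h0.1, h0.2, by ring⟩
    rw [Finset.sum_eq_single_of_mem _ hmem]
    rintro ⟨i, j⟩ hij hne
    rw [Finset.mem_addAntidiagonal] at hij
    exfalso
    apply hne
    have hi : 0 ≤ i := le_of_not_gt fun h => hij.1 (hx _ h)
    have hj : 0 ≤ j := le_of_not_gt fun h => hij.2.1 (hy _ h)
    have := hij.2.2
    simp only [Prod.mk.injEq]
    omega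
  · rw [not_and_or, not_not, not_not] at h0
    refine Eq.trans (Finset.sum_eq_zero fun ij hij => ?_) ?_
    · rw [Finset.mem_addAntidiagonal] at hij
      have hi : 0 ≤ ij.1 := le_of_not_gt fun h => hij.1 (hx _ h)
      have hj : 0 ≤ ij.2 := le_of_not_gt fun h => hij.2.1 (hy _ h)
      have h1 : ij.1 = 0 := by omega
      have h2 : ij.2 = 0 := by omega
      rcases h0 with h | h
      · rw [h1, h, zero_mul]
      · rw [h2, h, mul_zero]
    · rcases h0 with h | h
      · rw [h, zero_mul]
      · rw [h, mul_zero]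

@[simp] lemma Sop_coeff (r : ℕ) (f : LaurentSeries ℂ) (m : ℤ) :
    (Sop r f).coeff m = ((r + 1 : ℂ) / 2 - m) * f.coeff (m - r) - f.coeff (m + 1) := rfl

@[simp] lemma Sstar_coeff (r : ℕ) (f : LaurentSeries ℂ) (m : ℤ) :
    (Sstar r f).coeff m = ((m : ℂ) - (r + 1) / 2) * f.coeff (m - r) - f.coeff (m + 1) := rfl
lemma smul_single_eq (c : ℂ) :
    (-2 : ℂ) • (HahnSeries.single (-1 : ℤ) (1:ℂ) : LaurentSeries ℂ)
      = -(HahnSeries.single 0 (2:ℂ) * HahnSeries.single (-1 : ℤ) (1:ℂ)) := by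
  rw [HahnSeries.single_mul_single]
  ext m
  rcases eq_or_ne m (-1 : ℤ) with rfl | hm
  · simp [HahnSeries.coeff_smul]
  · simp [HahnSeries.coeff_smul, HahnSeries.coeff_single_of_ne hm]

lemma Sop_as (f : LaurentSeries ℂ) :
    Sop 2 f = HahnSeries.single 0 (3/2 : ℂ) * (HahnSeries.single (2:ℤ) (1:ℂ) * f)
      - Dop (HahnSeries.single (2:ℤ) (1:ℂ) * f) - HahnSeries.single (-1:ℤ) (1:ℂ) * f := by
  ext m
  simp only [Sop_coeff, HahnSeries.coeff_sub, HahnSeries.coeff_single_zero_mul,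
    single_mul_coeff', Dop_coeff]
  push_cast
  ring_nf

lemma Sstar_as (f : LaurentSeries ℂ) :
    Sstar 2 f = Dop (HahnSeries.single (2:ℤ) (1:ℂ) * f)
      - HahnSeries.single 0 (3/2 : ℂ) * (HahnSeries.single (2:ℤ) (1:ℂ) * f)
      - HahnSeries.single (-1:ℤ) (1:ℂ) * f := by
  ext m
  simp only [Sstar_coeff, HahnSeries.coeff_sub, HahnSeries.coeff_single_zero_mul,
    single_mul_coeff', Dop_coeff]
  push_cast
  ring_nf

lemma Dop_single (k : ℤ) (c : ℂ) :
    Dop (HahnSeries.single k c) = HahnSeries.single 0 ((k:ℂ)) * HahnSeries.single k c := by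
  ext m
  rcases eq_or_ne m k with rfl | hm
  · simp [HahnSeries.coeff_single_zero_mul]
  · simp [HahnSeries.coeff_single_zero_mul, HahnSeries.coeff_single_of_ne hm]

lemma single_zero_eq_two : (HahnSeries.single 0 (2:ℂ) : LaurentSeries ℂ) = 2 :=
  map_ofNat (HahnSeries.C : ℂ →+* LaurentSeries ℂ) 2

lemma main_aux (x y : LaurentSeries ℂ)
    (hx0 : x.coeff 0 = 1) (hy0 : y.coeff 0 = 1)
    (hxneg : ∀ m : ℤ, m < 0 → x.coeff m = 0)
    (hyneg : ∀ m : ℤ, m < 0 → y.coeff m = 0)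
    (hxrec : ∀ m : ℤ, ((m:ℂ)^2 - 3*m + 5/4) * x.coeff (m-3) = (-2*m) * x.coeff m)
    (hyrec : ∀ m : ℤ, ((m:ℂ)^2 - 3*m + 5/4) * y.coeff (m-3) = (2*m) * y.coeff m) :
    Sstar 2 y * x + y * Sop 2 x = (-2 : ℂ) • HahnSeries.single (-1 : ℤ) (1:ℂ) := by
  have hxode : HahnSeries.single (3:ℤ) (1:ℂ) *
      (HahnSeries.single 0 (5/4:ℂ) * x + HahnSeries.single 0 (3:ℂ) * Dop x + Dop (Dop x))
      = -(HahnSeries.single 0 (2:ℂ) * Dop x) := by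
    ext m
    simp only [single_mul_coeff', HahnSeries.coeff_add, HahnSeries.coeff_single_zero_mul,
      Dop_coeff, HahnSeries.coeff_neg]
    push_cast
    linear_combination hxrec m
  have hyode : HahnSeries.single (3:ℤ) (1:ℂ) *
      (HahnSeries.single 0 (5/4:ℂ) * y + HahnSeries.single 0 (3:ℂ) * Dop y + Dop (Dop y))
      = HahnSeries.single 0 (2:ℂ) * Dop y := by
    ext m
    simp only [single_mul_coeff', HahnSeries.coeff_add, HahnSeries.coeff_single_zero_mul,
      Dop_coeff]
    push_cast
    linear_combination hyrec m
  have hkeyD : Dop (HahnSeries.single (3:ℤ) (1:ℂ) * (x * Dop y - y * Dop x))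
      = HahnSeries.single 0 (2:ℂ) * Dop (x * y) := by
    rw [Dop_mul, Dop_single, Dop_sub, Dop_mul, Dop_mul, Dop_mul]
    push_cast
    linear_combination x * hyode - y * hxode
  have hDopnegx : ∀ m : ℤ, m < 0 → (Dop x).coeff m = 0 := fun m hm => by
    rw [Dop_coeff, hxneg m hm, mul_zero]
  have hDopnegy : ∀ m : ℤ, m < 0 → (Dop y).coeff m = 0 := fun m hm => by
    rw [Dop_coeff, hyneg m hm, mul_zero]
  have hYW : HahnSeries.single (3:ℤ) (1:ℂ) * (x * Dop y - y * Dop x)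
      = HahnSeries.single 0 (2:ℂ) * (x * y) - HahnSeries.single 0 (2:ℂ) := by
    ext m
    rcases eq_or_ne m 0 with rfl | hm
    · rw [single_mul_coeff', HahnSeries.coeff_sub, HahnSeries.coeff_sub,
        HahnSeries.coeff_single_zero_mul, mul_coeff_zero' x y hxneg hyneg, hx0, hy0,
        HahnSeries.coeff_single_same,
        mul_coeff_neg x (Dop y) hxneg hDopnegy _ (by norm_num),
        mul_coeff_neg y (Dop x) hyneg hDopnegx _ (by norm_num)]
      norm_num
    · have h := congrArg (fun u : LaurentSeries ℂ => u.coeff m) hkeyD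
      simp only [Dop_coeff, HahnSeries.coeff_single_zero_mul] at h
      have hm' : (m : ℂ) ≠ 0 := Int.cast_ne_zero.mpr hm
      rw [HahnSeries.coeff_sub, HahnSeries.coeff_single_zero_mul,
        HahnSeries.coeff_single_of_ne hm, sub_zero]
      apply mul_left_cancel₀ hm'
      linear_combination h
  have hZY : (HahnSeries.single (-1:ℤ) (1:ℂ) : LaurentSeries ℂ) * HahnSeries.single (3:ℤ) (1:ℂ)
      = HahnSeries.single (2:ℤ) (1:ℂ) := by
    rw [HahnSeries.single_mul_single]; norm_num
  rw [Sop_as, Sstar_as, Dop_mul, Dop_mul, Dop_single, smul_single_eq 2]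
  push_cast
  linear_combination (-(x * Dop y - y * Dop x)) * hZY
    + HahnSeries.single (-1:ℤ) (1:ℂ) * hYW
    + (HahnSeries.single (-1:ℤ) (1:ℂ) * x * y) * single_zero_eq_two
/-- Bilinear concomitant identity for `r = 2`: with `ω = exp(iπ/3)` and `a` the
formal solution in `1 + z^{-3}ℚ[[z^{-3}]]` of `S_z^2 a = z^2 a`,
`S_z^⋆(a(ωz))·a(z) + a(ωz)·S_z a(z) = -2z`  (`z = single (-1) 1` in `t = z⁻¹`). -/
theorem concomitant_r_two (a : LaurentSeries ℂ)
    (ha0 : a.coeff 0 = 1)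
    (hsupp : ∀ m : ℤ, a.coeff m ≠ 0 → ∃ k : ℕ, m = 3 * k)
    (hode : (Sop 2)^[2] a = HahnSeries.single (-2 : ℤ) 1 * a) :
    let ω : ℂ := Complex.exp (Real.pi * Complex.I / 3)
    Sstar 2 (rot ω a) * a + rot ω a * Sop 2 a
      = (-2 : ℂ) • HahnSeries.single (-1 : ℤ) (1 : ℂ) := by
  intro ω
  have hωdef : ω = Complex.exp (Real.pi * Complex.I / 3) := rfl
  have hωne : ω ≠ 0 := hωdef ▸ Complex.exp_ne_zero _
  have hω3 : ω ^ (3:ℕ) = -1 := by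
    rw [hωdef, ← Complex.exp_nat_mul]
    rw [show ((3:ℕ):ℂ) * (Real.pi * Complex.I / 3) = Real.pi * Complex.I by push_cast; ring]
    exact Complex.exp_pi_mul_I
  have hxneg : ∀ m : ℤ, m < 0 → a.coeff m = 0 := by
    intro m hm
    by_contra h
    obtain ⟨k, hk⟩ := hsupp m h
    omega
  have hb : ∀ m : ℤ, (rot ω a).coeff m = ω ^ (-m) * a.coeff m := fun m => rfl
  have hyneg : ∀ m : ℤ, m < 0 → (rot ω a).coeff m = 0 := by
    intro m hm
    rw [hb, hxneg m hm, mul_zero]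
  have hy0 : (rot ω a).coeff 0 = 1 := by
    rw [hb, ha0, neg_zero, zpow_zero, mul_one]
  have hode' : Sop 2 (Sop 2 a) = HahnSeries.single (-2 : ℤ) 1 * a := by
    rw [← hode, Function.iterate_succ_apply', Function.iterate_one]
  have hxrec : ∀ m : ℤ, ((m:ℂ)^2 - 3*m + 5/4) * a.coeff (m-3) = (-2*m) * a.coeff m := by
    intro m
    have h := congrArg (fun u : LaurentSeries ℂ => u.coeff (m + 1)) hode'
    simp only [Sop_coeff, single_mul_coeff'] at h
    rw [show m + 1 - ((2:ℕ):ℤ) = m - 1 by push_cast; ring,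
      show m - 1 - ((2:ℕ):ℤ) = m - 3 by push_cast; ring,
      show m - 1 + 1 = m by ring,
      show m + 1 + 1 - ((2:ℕ):ℤ) = m by push_cast; ring,
      show m + 1 + 1 + 1 = m + 3 by ring,
      show m + 1 - (-2 : ℤ) = m + 3 by ring] at h
    push_cast at h
    linear_combination h
  have hyrec : ∀ m : ℤ, ((m:ℂ)^2 - 3*m + 5/4) * (rot ω a).coeff (m-3)
      = (2*m) * (rot ω a).coeff m := by
    intro m
    have hωm : ω ^ (-(m - 3)) = -ω ^ (-m) := by
      rw [show -(m - 3) = (3:ℤ) + (-m) by ring, zpow_add₀ hωne,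
        show ((3:ℤ) : ℤ) = ((3:ℕ):ℤ) by norm_num, zpow_natCast, hω3]
      ring
    rw [hb, hb, hωm]
    linear_combination (-(ω ^ (-m))) * hxrec m
  exact main_aux a (rot ω a) ha0 hy0 hxneg hyneg hxrec hyrec
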